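/- If ρ is an order-decreasing, order-reversing (antitone) partial transformation of the chain [n] = {1,…,n} with image of size p ≥ 1, then p ≤ ⌈n/2⌉ (equivalently 2p ≤ n+1). -/

import Mathlib

/-- A partial transformation of the chain `[n]` (elements of `Fin n`). -/
def PT (n : ℕ) := Fin n → Option (Fin n)

/-- Right-to-left composition: `x (ρσ) = (x ρ) σ`. -/
def comp {n : ℕ} (ρ σ : PT n) : PT n := fun x => (ρ x).bind σ

/-- The identity partial transformation. -/
def idPT (n : ℕ) : PT n := fun x => some x

/-- Isotone (order-preserving) on its domain. -/
def IsIsotone {n : ℕ} (ρ : PT n) : Prop :=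
  ∀ x x' y y' : Fin n, ρ x = some y → ρ x' = some y' → x ≤ x' → y ≤ y'

/-- Antitone (order-reversing) on its domain. -/
def IsAntitone {n : ℕ} (ρ : PT n) : Prop :=
  ∀ x x' y y' : Fin n, ρ x = some y → ρ x' = some y' → x ≤ x' → y' ≤ y

/-- Order-decreasing on its domain. -/
def IsDecreasing {n : ℕ} (ρ : PT n) : Prop :=
  ∀ x y : Fin n, ρ x = some y → y ≤ x

/-- Member of the monoid `DORPₙ`: monotone and order-decreasing. -/
def IsDORP {n : ℕ} (ρ : PT n) : Prop :=
  IsDecreasing ρ ∧ (IsIsotone ρ ∨ IsAntitone ρ)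

/-- The image of a partial transformation. -/
def im {n : ℕ} (ρ : PT n) : Set (Fin n) := {y | ∃ x, ρ x = some y}

/-- The domain of a partial transformation. -/
def domSet {n : ℕ} (ρ : PT n) : Set (Fin n) := {x | ρ x ≠ none}

/-- The height of a partial transformation: the size of its image. -/
noncomputable def height {n : ℕ} (ρ : PT n) : ℕ := (im ρ).ncard

/-- Equality of kernels: same domain and the same partition into fibers. -/
def kerEq {n : ℕ} (ρ σ : PT n) : Prop :=
  (∀ x, ρ x = none ↔ σ x = none) ∧ (∀ x y, ρ x = ρ y ↔ σ x = σ y)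

/-- An antitone, order-decreasing partial transformation of `[n]` with image of size
`p ≥ 1` satisfies `p ≤ ⌈n/2⌉`, i.e. `2p ≤ n+1`. -/
theorem stmt1 (n p : ℕ) (ρ : PT n) (hdec : IsDecreasing ρ) (hanti : IsAntitone ρ)
    (hp : height ρ = p) (hp1 : 1 ≤ p) : 2 * p ≤ n + 1 := by
  classical
  have hfin : (im ρ).Finite := Set.toFinite _
  set T : Finset (Fin n) := hfin.toFinset with hT
  have hcard : T.card = p := by
    rw [hT, ← hp]
    exact (Set.ncard_eq_toFinset_card _ hfin).symm
  have hne : T.Nonempty := Finset.card_pos.mp (by omega)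
  set ymax : Fin n := T.max' hne with hym
  have hg : ∀ y ∈ T, ∃ x, ρ x = some y := by
    intro y hy
    rw [hT, Set.Finite.mem_toFinset] at hy
    exact hy
  choose g hgspec using hg
  set xm : Fin n := g ymax (T.max'_mem hne) with hxmdef
  have hxm : ρ xm = some ymax := hgspec ymax (T.max'_mem hne)
  have hge : ∀ y (hy : y ∈ T), xm ≤ g y hy := by
    intro y hy
    by_contra h
    push_neg at h
    have h1 : ymax ≤ y := hanti _ _ _ _ (hgspec y hy) hxm h.le
    have h2 : y ≤ ymax := Finset.le_max' T y hy
    have heq : y = ymax := le_antisymm h2 h1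
    subst heq
    exact absurd rfl (ne_of_lt h)
  -- Bound 1: p ≤ n - xm.val
  have hb1 : p ≤ n - xm.val := by
    rw [← hcard]
    have := Finset.card_le_card_of_injOn
      (f := fun y => if h : y ∈ T then (g y h).val else 0)
      (s := T) (t := Finset.Icc xm.val (n - 1))
      (by
        intro y hy
        simp only [Finset.mem_coe] at hy ⊢
        simp only [hy, dif_pos, Finset.mem_Icc]
        refine ⟨hge y hy, ?_⟩
        have := (g y hy).isLt
        omega)
      (by
        intro a ha b hb hab
        simp only [Finset.mem_coe] at ha hb
        simp only [ha, hb, dif_pos] at hab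
        have h2 : g a ha = g b hb := Fin.val_injective hab
        have h3 : ρ (g a ha) = ρ (g b hb) := by rw [h2]
        rw [hgspec a ha, hgspec b hb] at h3
        exact Option.some_injective _ h3)
    have hc : (Finset.Icc xm.val (n - 1)).card = n - 1 + 1 - xm.val :=
      Nat.card_Icc _ _
    have hlt := xm.isLt
    omega
  -- Bound 2: p ≤ ymax.val + 1
  have hb2 : p ≤ ymax.val + 1 := by
    rw [← hcard]
    have := Finset.card_le_card_of_injOn (f := Fin.val)
      (s := T) (t := Finset.Iic ymax.val)
      (by
        intro y hy
        simp only [Finset.mem_coe, Finset.mem_Iic] at hy ⊢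
        exact Finset.le_max' T y hy)
      (fun a _ b _ hab => Fin.val_injective hab)
    simpa [Nat.card_Iic] using this
  have hdx : ymax.val ≤ xm.val := hdec xm ymax hxm
  have hlt := xm.isLt
  omega
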